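/- Let Ω = {z ∈ ℂ : 1/4 < |z| < 1/2}. Then λ̃(z) = 1/(2√|z| (1-|z|)) is a C² positive function on Ω satisfying Δ(log λ̃) = 4 λ̃² (i.e., the conformal metric λ̃(z)|dz| has constant curvature -4), with boundary values λ̃(ξ) = 4/3 for |ξ| = 1/4 and λ̃(ξ) = √2 for |ξ| = 1/2. Moreover, on the slit annulus D = Ω \ (-1/2, -1/4), one has λ̃(z) = |g'(z)|/(1-|g(z)|²) where g is a holomorphic branch of √z mapping D into 𝔻. -/

import Mathlib

open Complex

/-- Euclidean Laplacian of a real-valued function on `ℂ`. -/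
noncomputable def lap (u : ℂ → ℝ) (z : ℂ) : ℝ :=
  fderiv ℝ (fun w => fderiv ℝ u w 1) z 1 + fderiv ℝ (fun w => fderiv ℝ u w Complex.I) z Complex.I

/-! ### Auxiliary lemmas -/

noncomputable def Af (t : ℝ) : ℝ := -(1/(4*t)) + 1/(2*Real.sqrt t*(1-Real.sqrt t))
noncomputable def Bf (t : ℝ) : ℝ :=
  1/(4*t^2) + (2*Real.sqrt t - 1)/(4*Real.sqrt t*t*(1-Real.sqrt t)^2)
noncomputable def DN (w : ℂ) : ℂ →L[ℝ] ℝ := (2*w.re) • Complex.reCLM + (2*w.im) • Complex.imCLM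

lemma hasFDerivAt_normSq' (w : ℂ) : HasFDerivAt Complex.normSq (DN w) w := by
  have h1 : HasFDerivAt (fun z : ℂ => z.re) (Complex.reCLM : ℂ →L[ℝ] ℝ) w :=
    Complex.reCLM.hasFDerivAt
  have h2 : HasFDerivAt (fun z : ℂ => z.im) (Complex.imCLM : ℂ →L[ℝ] ℝ) w :=
    Complex.imCLM.hasFDerivAt
  have h := (h1.mul h1).add (h2.mul h2)
  have heq : Complex.normSq = fun z : ℂ => z.re * z.re + z.im * z.im := by
    funext z; simp [Complex.normSq_apply]
  rw [heq]
  refine h.congr_fderiv ?_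
  ext v
  simp [DN]
  ring

lemma DN_one (w : ℂ) : DN w 1 = 2*w.re := by simp [DN]
lemma DN_I (w : ℂ) : DN w Complex.I = 2*w.im := by simp [DN]

lemma hasDerivAt_phi {t : ℝ} (ht : 0 < t) (ht1 : Real.sqrt t < 1) :
    HasDerivAt (fun s => -Real.log 2 - (1/4)*Real.log s - Real.log (1 - Real.sqrt s)) (Af t) t := by
  have hr : 0 < Real.sqrt t := Real.sqrt_pos.mpr ht
  have h1 : HasDerivAt (fun s : ℝ => (1/4)*Real.log s) ((1/4)*t⁻¹) t :=
    (Real.hasDerivAt_log ht.ne').const_mul _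
  have hs : HasDerivAt (fun s : ℝ => 1 - Real.sqrt s) (-(1/(2*Real.sqrt t))) t := by
    simpa using (Real.hasDerivAt_sqrt ht.ne').const_sub 1
  have h2 : HasDerivAt (fun s : ℝ => Real.log (1 - Real.sqrt s))
      ((-(1/(2*Real.sqrt t)))/(1 - Real.sqrt t)) t := hs.log (by linarith)
  have h := ((h1.const_sub (-Real.log 2)).sub h2)
  refine h.congr_deriv (Eq.symm ?_)
  have h3 : (1:ℝ) - Real.sqrt t ≠ 0 := by linarith
  rw [Af]; field_simp; ring

lemma hasDerivAt_Af {t : ℝ} (ht : 0 < t) (ht1 : Real.sqrt t < 1) :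
    HasDerivAt Af (Bf t) t := by
  have hr : 0 < Real.sqrt t := Real.sqrt_pos.mpr ht
  have h3 : (1:ℝ) - Real.sqrt t ≠ 0 := by linarith
  have h1 : HasDerivAt (fun s : ℝ => -(1/(4*s))) (1/(4*t^2)) t := by
    have h := (hasDerivAt_inv ht.ne').const_mul (-(1/4):ℝ)
    convert h using 1
    · rfl
    · rfl
    · funext s; ring
    · field_simp
  have hs : HasDerivAt (fun s : ℝ => Real.sqrt s) (1/(2*Real.sqrt t)) t :=
    Real.hasDerivAt_sqrt ht.ne'
  have hden : HasDerivAt (fun s : ℝ => 2*Real.sqrt s*(1-Real.sqrt s))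
      ((1/Real.sqrt t) - 2) t := by
    have h := (hs.const_mul (2:ℝ)).mul (hs.const_sub 1)
    refine h.congr_deriv (Eq.symm ?_)
    field_simp; ring
  have h2 : HasDerivAt (fun s : ℝ => 1/(2*Real.sqrt s*(1-Real.sqrt s)))
      (-((1/Real.sqrt t) - 2)/(2*Real.sqrt t*(1-Real.sqrt t))^2) t := by
    have hne : 2*Real.sqrt t*(1-Real.sqrt t) ≠ 0 := by positivity
    simpa [one_div, Pi.inv_def] using hden.inv hne
  have h := h1.add h2
  show HasDerivAt (fun s : ℝ => -(1/(4*s)) + 1/(2*Real.sqrt s*(1-Real.sqrt s))) (Bf t) t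
  refine h.congr_deriv (Eq.symm ?_)
  rw [Bf]
  have h2' : Real.sqrt t ^ 2 = t := Real.sq_sqrt ht.le
  set r := Real.sqrt t with hrdef
  rw [← h2']
  field_simp
  ring

lemma alg_lemma {t : ℝ} (ht : 0 < t) (ht1 : Real.sqrt t < 1) :
    4 * Af t + 4 * t * Bf t = 1/(Real.sqrt t * (1 - Real.sqrt t)^2) := by
  have hr : 0 < Real.sqrt t := Real.sqrt_pos.mpr ht
  have h3 : (1:ℝ) - Real.sqrt t ≠ 0 := by linarith
  have h2' : Real.sqrt t ^ 2 = t := Real.sq_sqrt ht.le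
  rw [Af, Bf]
  set r := Real.sqrt t with hrdef
  rw [← h2']
  field_simp
  ring

lemma lap_log_lam (lam : ℂ → ℝ)
    (hlam : ∀ z, lam z = 1 / (2 * Real.sqrt (‖z‖) * (1 - ‖z‖)))
    (z : ℂ) (h1 : 1/4 < ‖z‖) (h2 : ‖z‖ < 1/2) :
    lap (fun w => Real.log (lam w)) z = 4 * (lam z)^2 := by
  classical
  set φ : ℝ → ℝ := fun s => -Real.log 2 - (1/4)*Real.log s - Real.log (1 - Real.sqrt s) with hφ
  set U : Set ℂ := {w : ℂ | 1/8 < ‖w‖ ∧ ‖w‖ < 3/4} with hU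
  have hUopen : IsOpen U := (isOpen_Ioo).preimage continuous_norm
  have hzU : z ∈ U := ⟨by linarith, by linarith⟩
  have key : ∀ w ∈ U, 0 < Complex.normSq w ∧ Real.sqrt (Complex.normSq w) < 1 := by
    intro w hw
    have habs : Real.sqrt (Complex.normSq w) = ‖w‖ := (Complex.norm_def w).symm
    have h0 : (0:ℝ) < ‖w‖ := lt_trans (by norm_num) hw.1
    have hsq : ‖w‖ ^ 2 = Complex.normSq w := Complex.sq_norm w
    exact ⟨by nlinarith, by rw [habs]; linarith [hw.2]⟩
  have hlog : ∀ w ∈ U, Real.log (lam w) = φ (Complex.normSq w) := by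
    intro w hw
    have habs : ‖w‖ = Real.sqrt (Complex.normSq w) := Complex.norm_def _
    have h0 : (0:ℝ) < ‖w‖ := lt_trans (by norm_num) hw.1
    have hlt : ‖w‖ < 1 := lt_trans hw.2 (by norm_num)
    have hs0 : (0:ℝ) < Real.sqrt (‖w‖) := Real.sqrt_pos.mpr h0
    have hN : 0 < Complex.normSq w := (key w hw).1
    rw [hlam, hφ]
    rw [one_div, Real.log_inv, Real.log_mul (by positivity) (by linarith),
      Real.log_mul (by norm_num) hs0.ne', Real.log_sqrt (norm_nonneg w)]
    have hlogN : Real.log (Complex.normSq w) = 2 * Real.log (‖w‖) := by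
      rw [habs, Real.log_sqrt (Complex.normSq_nonneg w)]; ring
    show _ = -Real.log 2 - 1/4 * Real.log (Complex.normSq w)
        - Real.log (1 - Real.sqrt (Complex.normSq w))
    rw [← habs, hlogN]
    ring
  have hderiv : ∀ w ∈ U, HasFDerivAt (fun x => Real.log (lam x))
      (Af (Complex.normSq w) • DN w) w := by
    intro w hw
    obtain ⟨hN, hN1⟩ := key w hw
    have hc : HasFDerivAt (φ ∘ Complex.normSq) (Af (Complex.normSq w) • DN w) w :=
      (hasDerivAt_phi hN hN1).comp_hasFDerivAt w (hasFDerivAt_normSq' w)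
    apply hc.congr_of_eventuallyEq
    filter_upwards [hUopen.mem_nhds hw] with x hx
    exact hlog x hx
  have hpart1 : ∀ w ∈ U, fderiv ℝ (fun x => Real.log (lam x)) w 1
      = Af (Complex.normSq w) * (2*w.re) := by
    intro w hw
    rw [(hderiv w hw).fderiv]
    simp [DN_one w]
  have hpart2 : ∀ w ∈ U, fderiv ℝ (fun x => Real.log (lam x)) w Complex.I
      = Af (Complex.normSq w) * (2*w.im) := by
    intro w hw
    rw [(hderiv w hw).fderiv]
    simp [DN_I w]
  obtain ⟨hNz, hNz1⟩ := key z hzU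
  have hAf : HasFDerivAt (fun w => Af (Complex.normSq w))
      (Bf (Complex.normSq z) • DN z) z :=
    (hasDerivAt_Af hNz hNz1).comp_hasFDerivAt z (hasFDerivAt_normSq' z)
  have hre : HasFDerivAt (fun w : ℂ => 2*w.re) ((2:ℝ) • (Complex.reCLM : ℂ →L[ℝ] ℝ)) z := by
    simpa using (Complex.reCLM.hasFDerivAt (x := z)).const_mul (2:ℝ)
  have him : HasFDerivAt (fun w : ℂ => 2*w.im) ((2:ℝ) • (Complex.imCLM : ℂ →L[ℝ] ℝ)) z := by
    simpa using (Complex.imCLM.hasFDerivAt (x := z)).const_mul (2:ℝ)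
  have hu1 : HasFDerivAt (fun w => Af (Complex.normSq w) * (2*w.re))
      ((Af (Complex.normSq z)) • ((2:ℝ) • (Complex.reCLM : ℂ →L[ℝ] ℝ))
        + (2*z.re) • (Bf (Complex.normSq z) • DN z)) z := hAf.mul hre
  have hu2 : HasFDerivAt (fun w => Af (Complex.normSq w) * (2*w.im))
      ((Af (Complex.normSq z)) • ((2:ℝ) • (Complex.imCLM : ℂ →L[ℝ] ℝ))
        + (2*z.im) • (Bf (Complex.normSq z) • DN z)) z := hAf.mul him
  have he1 : (fun w => fderiv ℝ (fun x => Real.log (lam x)) w 1)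
      =ᶠ[nhds z] (fun w => Af (Complex.normSq w) * (2*w.re)) := by
    filter_upwards [hUopen.mem_nhds hzU] with x hx
    exact hpart1 x hx
  have he2 : (fun w => fderiv ℝ (fun x => Real.log (lam x)) w Complex.I)
      =ᶠ[nhds z] (fun w => Af (Complex.normSq w) * (2*w.im)) := by
    filter_upwards [hUopen.mem_nhds hzU] with x hx
    exact hpart2 x hx
  have hl : lap (fun w => Real.log (lam w)) z
      = 4 * Af (Complex.normSq z) + 4 * Complex.normSq z * Bf (Complex.normSq z) := by
    rw [lap, he1.fderiv_eq, he2.fderiv_eq, hu1.fderiv, hu2.fderiv]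
    simp [DN_one, DN_I]
    rw [Complex.normSq_apply]
    ring
  rw [hl]
  have hr : 0 < Real.sqrt (Complex.normSq z) := Real.sqrt_pos.mpr hNz
  have h3 : (1:ℝ) - Real.sqrt (Complex.normSq z) ≠ 0 := by linarith
  have h2' : Real.sqrt (Complex.normSq z) ^ 2 = Complex.normSq z := Real.sq_sqrt hNz.le
  have habs : ‖z‖ = Real.sqrt (Complex.normSq z) := Complex.norm_def _
  have ha2 : Real.sqrt (Real.sqrt (Complex.normSq z)) ^ 2 = Real.sqrt (Complex.normSq z) :=
    Real.sq_sqrt hr.le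
  have ha0 : 0 < Real.sqrt (Real.sqrt (Complex.normSq z)) := Real.sqrt_pos.mpr hr
  rw [alg_lemma hNz hNz1, hlam, habs]
  set r := Real.sqrt (Complex.normSq z) with hrdef
  set a := Real.sqrt r with hadef
  rw [div_pow, one_pow, mul_pow, mul_pow, ha2]
  rw [show ((2:ℝ)^2) = 4 by norm_num]
  rw [eq_comm]
  field_simp

/-- On the annulus `Ω = {1/4 < |z| < 1/2}`, the function `λ̃(z) = 1/(2√|z|(1-|z|))` is a
positive C² conformal density of constant curvature `-4`, with boundary values `4/3` on
`|ξ| = 1/4` and `√2` on `|ξ| = 1/2`; and on the slit annulus `D = Ω ∖ (-1/2,-1/4)` one has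
`λ̃ = |g'|/(1-|g|²)` for a holomorphic branch `g` of `√z` mapping `D` into `𝔻`. -/
theorem annulus_metric
    (Ω D : Set ℂ)
    (hΩ : Ω = {z : ℂ | 1/4 < ‖z‖ ∧ ‖z‖ < 1/2})
    (hD : D = Ω \ {z : ℂ | z.im = 0 ∧ z.re < 0})
    (lam : ℂ → ℝ)
    (hlam : ∀ z, lam z = 1 / (2 * Real.sqrt (‖z‖) * (1 - ‖z‖))) :
    (∀ z ∈ Ω, 0 < lam z) ∧
    ContDiffOn ℝ 2 lam Ω ∧
    (∀ z ∈ Ω, lap (fun w => Real.log (lam w)) z = 4 * (lam z)^2) ∧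
    (∀ ξ : ℂ, ‖ξ‖ = 1/4 → lam ξ = 4/3) ∧
    (∀ ξ : ℂ, ‖ξ‖ = 1/2 → lam ξ = Real.sqrt 2) ∧
    (∃ g : ℂ → ℂ, DifferentiableOn ℂ g D ∧
      (∀ z ∈ D, (g z)^2 = z) ∧
      Set.MapsTo g D (Metric.ball (0:ℂ) 1) ∧
      ∀ z ∈ D, lam z = ‖deriv g z‖ / (1 - (‖g z‖)^2)) := by
  refine ⟨?_, ?_, ?_, ?_, ?_, ?_⟩
  · -- positivity
    intro z hz
    rw [hΩ] at hz
    obtain ⟨h1, h2⟩ := hz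
    have h0 : (0:ℝ) < ‖z‖ := by linarith
    have hs : 0 < Real.sqrt (‖z‖) := Real.sqrt_pos.mpr h0
    have h3 : (0:ℝ) < 1 - ‖z‖ := by linarith
    rw [hlam]
    positivity
  · -- smoothness
    rw [hΩ]
    intro z hz
    obtain ⟨h1, h2⟩ := hz
    have h0 : (0:ℝ) < ‖z‖ := by linarith
    apply ContDiffAt.contDiffWithinAt
    have habs : ∀ w : ℂ, ‖w‖ = Real.sqrt (Complex.normSq w) :=
      fun w => Complex.norm_def w
    have hN : ContDiffAt ℝ 2 Complex.normSq z := by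
      have h : ContDiff ℝ 2 (fun w : ℂ => w.re * w.re + w.im * w.im) :=
        (Complex.reCLM.contDiff.mul Complex.reCLM.contDiff).add
          (Complex.imCLM.contDiff.mul Complex.imCLM.contDiff)
      have he : Complex.normSq = fun w : ℂ => w.re * w.re + w.im * w.im := by
        funext w; simp [Complex.normSq_apply]
      rw [he]; exact h.contDiffAt
    have hNz : 0 < Complex.normSq z := by
      have := Complex.sq_norm z; nlinarith
    have hA : ContDiffAt ℝ 2 (fun w : ℂ => Real.sqrt (Complex.normSq w)) z :=
      (Real.contDiffAt_sqrt hNz.ne').comp z hN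
    have hAz : Real.sqrt (Complex.normSq z) = ‖z‖ := (habs z).symm
    have hS : ContDiffAt ℝ 2 (fun w : ℂ => Real.sqrt (Real.sqrt (Complex.normSq w))) z := by
      refine (Real.contDiffAt_sqrt ?_).comp z hA
      rw [hAz]; exact h0.ne'
    have heq : lam = fun w : ℂ =>
        (2 * Real.sqrt (Real.sqrt (Complex.normSq w)) * (1 - Real.sqrt (Complex.normSq w)))⁻¹ := by
      funext w; rw [hlam, habs w, one_div]
    rw [heq]
    apply ContDiffAt.inv
    · exact (contDiffAt_const.mul hS).mul (contDiffAt_const.sub hA)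
    · rw [hAz]
      have hh1 : 0 < Real.sqrt (‖z‖) := Real.sqrt_pos.mpr h0
      have hh2 : (0:ℝ) < 1 - ‖z‖ := by linarith
      positivity
  · -- curvature
    intro z hz
    rw [hΩ] at hz
    exact lap_log_lam lam hlam z hz.1 hz.2
  · -- boundary value at 1/4
    intro ξ h
    rw [hlam, h, show (1/4:ℝ) = (1/2)^2 by norm_num, Real.sqrt_sq (by norm_num : (0:ℝ) ≤ 1/2)]
    norm_num
  · -- boundary value at 1/2
    intro ξ h
    rw [hlam, h]
    rw [show (2:ℝ) * Real.sqrt (1/2) * (1 - 1/2) = Real.sqrt (1/2) by ring]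
    rw [one_div, ← Real.sqrt_inv]
    norm_num
  · -- the branch of sqrt
    set g : ℂ → ℂ := fun z => Complex.exp ((1/2 : ℂ) * Complex.log z) with hg
    have hbasic : ∀ z ∈ D, 1/4 < ‖z‖ ∧ ‖z‖ < 1/2 ∧ z ∈ Complex.slitPlane := by
      intro z hz
      rw [hD, hΩ] at hz
      obtain ⟨⟨ha, hb⟩, hc⟩ := hz
      refine ⟨ha, hb, ?_⟩
      rw [Complex.mem_slitPlane_iff]
      by_cases him : z.im = 0
      · left
        have hre : ¬ z.re < 0 := fun h => hc ⟨him, h⟩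
        have h0 : z ≠ 0 := by
          intro h; rw [h] at ha; simp at ha; linarith
        have hne : z.re ≠ 0 := fun h => h0 (Complex.ext h him)
        exact lt_of_le_of_ne (not_lt.mp hre) (Ne.symm hne)
      · right; exact him
    have hne0 : ∀ z ∈ D, z ≠ 0 := by
      intro z hz h
      have := (hbasic z hz).1
      rw [h] at this; simp at this; linarith
    have habsg : ∀ z ∈ D, ‖g z‖ = Real.sqrt (‖z‖) := by
      intro z hz
      have h0 : (0:ℝ) < ‖z‖ := by linarith [(hbasic z hz).1]
      have h1 : ‖g z‖ = Real.exp ((1/2) * Real.log (‖z‖)) := by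
        rw [hg]
        simp only [Complex.norm_exp]
        congr 1
        rw [Complex.mul_re]
        simp [Complex.log_re]
      have he : (Real.exp ((1/2) * Real.log (‖z‖)))^2 = ‖z‖ := by
        rw [sq, ← Real.exp_add,
          show (1/2) * Real.log (‖z‖) + (1/2) * Real.log (‖z‖)
            = Real.log (‖z‖) by ring,
          Real.exp_log h0]
      have hss : Real.sqrt (‖z‖) = Real.exp ((1/2) * Real.log (‖z‖)) := by
        conv_lhs => rw [← he]
        exact Real.sqrt_sq (Real.exp_pos _).le
      rw [h1, hss]
    have hderiv : ∀ z ∈ D, HasDerivAt g (g z * ((1/2:ℂ) * z⁻¹)) z := by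
      intro z hz
      exact ((Complex.hasDerivAt_log (hbasic z hz).2.2).const_mul (1/2:ℂ)).cexp
    refine ⟨g, ?_, ?_, ?_, ?_⟩
    · intro z hz
      exact (hderiv z hz).differentiableAt.differentiableWithinAt
    · intro z hz
      rw [hg]
      simp only
      rw [sq, ← Complex.exp_add,
        show (1/2:ℂ) * Complex.log z + (1/2:ℂ) * Complex.log z = Complex.log z by ring,
        Complex.exp_log (hne0 z hz)]
    · intro z hz
      rw [Metric.mem_ball, dist_zero_right, habsg z hz]
      rw [show (1:ℝ) = Real.sqrt 1 by simp]
      exact Real.sqrt_lt_sqrt (norm_nonneg z) (by linarith [(hbasic z hz).2.1])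
    · intro z hz
      obtain ⟨ha, hb, _⟩ := hbasic z hz
      have h0 : (0:ℝ) < ‖z‖ := by linarith
      rw [(hderiv z hz).deriv, norm_mul, norm_mul, norm_inv, habsg z hz,
        show ‖(1/2 : ℂ)‖ = 1/2 by
          rw [norm_div]; simp]
      rw [hlam]
      set r := ‖z‖ with hr
      set s := Real.sqrt r with hs
      have hs2 : s^2 = r := Real.sq_sqrt h0.le
      have hspos : 0 < s := Real.sqrt_pos.mpr h0
      have hrlt : r < 1 := by linarith
      rw [← hs2]
      have hne1 : (1:ℝ) - s^2 ≠ 0 := by rw [hs2]; linarith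
      field_simp
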